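/- Bruneau's lemma: for every continuous function f : [0,T] → ℝ, every t ∈ (0,T], every 1 ≤ q < p, and every λ ≥ sup_{s∈[0,t]} |f(s) − f(0)|, the strong p-variation of f over [0,t] satisfies var_p(f,[0,t]) ≤ (2^{p+q+1}/(1 − 2^{q−p})) (2 c + 1) λ^p, where c = sup_{k∈ℕ} 2^{−kq} M_t(f, λ2^{−k}) and M_t(f,δ) = Σ_{k∈ℤ} M_t(f,(kδ,(k+1)δ)) is the total number of upcrossings by f of the intervals of the δ-grid during [0,t]. -/

import Mathlib

open scoped ENNReal

noncomputable section

/-- Strong `p`-variation of `f` over `[a,b]`: the supremum over all finite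
subdivisions `a = t₀ < t₁ < ⋯ < tₙ = b` of `Σᵢ |f(tᵢ) − f(tᵢ₋₁)|^p`. -/
def pVar (p : ℝ) (f : ℝ → ℝ) (a b : ℝ) : ℝ≥0∞ :=
  ⨆ (n : ℕ) (t : Fin (n + 1) → ℝ)
    (_ : StrictMono t ∧ t 0 = a ∧ t (Fin.last n) = b),
    ∑ i : Fin n, ENNReal.ofReal (|f (t i.succ) - f (t i.castSucc)| ^ p)

/-- `v` is a strong variation exponent of `f` over `[0,T]`:
`var_p(f)` is finite for `p > v` and infinite for `p < v`. -/
def IsVex (T : ℝ) (f : ℝ → ℝ) (v : ℝ≥0∞) : Prop :=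
  (∀ p : ℝ, 0 < p → v < ENNReal.ofReal p → pVar p f 0 T < ⊤) ∧
  (∀ p : ℝ, 0 < p → ENNReal.ofReal p < v → pVar p f 0 T = ⊤)

/-- The strong variation exponent of `f` over `[0,T]`. -/
def vex (T : ℝ) (f : ℝ → ℝ) : ℝ≥0∞ :=
  sInf {v : ℝ≥0∞ | ∀ p : ℝ, 0 < p → v < ENNReal.ofReal p → pVar p f 0 T < ⊤}

/-- The sample space: continuous real-valued functions on `[0,T]`. -/
def GSpace (T : ℝ) := {f : ℝ → ℝ // ContinuousOn f (Set.Icc 0 T)}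

/-- The filtration: `ℱ_t` is generated by the evaluation maps `ω ↦ ω(s)`, `s ∈ [0,t]`. -/
def gFiltration (T t : ℝ) : MeasurableSpace (GSpace T) :=
  ⨆ s ∈ Set.Icc (0 : ℝ) t, MeasurableSpace.comap (fun ω : GSpace T => ω.1 s) inferInstance

/-- An elementary trading strategy: an increasing sequence of stopping times
`τₙ` (with values in `[0,T] ∪ {∞}`, only finitely many finite on each `ω`)
together with bounded `ℱ_{τₙ}`-measurable portfolios `hₙ`. -/
structure ElemStrategy (T : ℝ) where
  τ : ℕ → GSpace T → ℝ≥0∞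
  h : ℕ → GSpace T → ℝ
  mono : ∀ n ω, τ n ω ≤ τ (n + 1) ω
  codom : ∀ n ω, τ n ω ≤ ENNReal.ofReal T ∨ τ n ω = ⊤
  fin : ∀ ω, Set.Finite {n | τ n ω ≠ ⊤}
  stopping : ∀ n (t : ℝ), (gFiltration T t).MeasurableSet' {ω | τ n ω ≤ ENNReal.ofReal t}
  bdd : ∀ n, ∃ C : ℝ, ∀ ω, |h n ω| ≤ C
  adapted : ∀ n (B : Set ℝ), MeasurableSet B → ∀ t : ℝ,
    (gFiltration T t).MeasurableSet' ({ω | h n ω ∈ B} ∩ {ω | τ n ω ≤ ENNReal.ofReal t})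

/-- The elementary capital process
`K_t(ω) = c + Σₙ hₙ(ω) (ω(τ_{n+1} ∧ t) − ω(τₙ ∧ t))`. -/
def ElemStrategy.capital {T : ℝ} (G : ElemStrategy T) (c : ℝ) (t : ℝ) (ω : GSpace T) : ℝ :=
  c + ∑' n : ℕ,
    G.h n ω * (ω.1 ((G.τ (n + 1) ω ⊓ ENNReal.ofReal t).toReal)
      - ω.1 ((G.τ n ω ⊓ ENNReal.ofReal t).toReal))

/-- A positive capital process: a countable sum of positive elementary capital
processes with summable positive initial capitals. -/
structure PosCapital (T : ℝ) where
  G : ℕ → ElemStrategy T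
  c : ℕ → ℝ
  c_nonneg : ∀ n, 0 ≤ c n
  c_summable : Summable c
  pos : ∀ n (t : ℝ), t ∈ Set.Icc 0 T → ∀ ω, 0 ≤ (G n).capital (c n) t ω

/-- The value (in `[0,∞]`) of a positive capital process at time `t`. -/
def PosCapital.value {T : ℝ} (S : PosCapital T) (t : ℝ) (ω : GSpace T) : ℝ≥0∞ :=
  ∑' n : ℕ, ENNReal.ofReal ((S.G n).capital (S.c n) t ω)

/-- The initial value `S₀ = Σₙ cₙ` of a positive capital process. -/
def PosCapital.init {T : ℝ} (S : PosCapital T) : ℝ≥0∞ :=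
  ∑' n : ℕ, ENNReal.ofReal (S.c n)

/-- Game-theoretic upper probability of `E ⊆ Ω`:
`inf {S₀ : S positive capital process, S_T ≥ 1_E}`. -/
def upperProb (T : ℝ) (E : Set (GSpace T)) : ℝ≥0∞ :=
  ⨅ (S : PosCapital T) (_ : ∀ ω, E.indicator (fun _ => (1 : ℝ≥0∞)) ω ≤ S.value T ω), S.init

/-- The number of upcrossings (as an element of `[0,∞]`) of the open interval
`(a,b)` by `f` during the time interval `[0,t]`. -/
def upcross (f : ℝ → ℝ) (a b t : ℝ) : ℝ≥0∞ :=
  ⨆ (n : ℕ) (u : Fin n → ℝ) (v : Fin n → ℝ)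
    (_ : (∀ i, 0 ≤ u i ∧ u i < v i ∧ v i ≤ t) ∧
         (∀ i j : Fin n, i < j → v i < u j) ∧
         (∀ i, f (u i) < a ∧ b < f (v i))),
    (n : ℝ≥0∞)

/-- `M_t(f,δ) = Σ_{k∈ℤ} M_t(f,(kδ,(k+1)δ))`: the total number of upcrossings
of the intervals of the `δ`-grid by `f` during `[0,t]`. -/
def gridUpcross (f : ℝ → ℝ) (δ t : ℝ) : ℝ≥0∞ :=
  ∑' k : ℤ, upcross f (k * δ) ((k + 1) * δ) t

/-- The successive hitting times of new points of the grid `δℤ`: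
`τ₀ = 0`, `τ_{n+1} = inf {t ∈ (τₙ, T] : f(t) ∈ δℤ \ {f(τₙ)}}` (with `inf ∅ = ∞`). -/
def gridTimes (T δ : ℝ) (f : ℝ → ℝ) : ℕ → ℝ≥0∞
  | 0 => 0
  | n + 1 => sInf {s : ℝ≥0∞ | ∃ t : ℝ, s = ENNReal.ofReal t ∧ t ≤ T ∧
      gridTimes T δ f n < ENNReal.ofReal t ∧ (∃ k : ℤ, f t = (k : ℝ) * δ) ∧
      f t ≠ f ((gridTimes T δ f n).toReal)}

section BruneauHelpers

lemma upcross_ge (f : ℝ → ℝ) (a b t : ℝ) (m : ℕ) (u v : Fin m → ℝ)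
    (h1 : ∀ i, 0 ≤ u i ∧ u i < v i ∧ v i ≤ t) (h2 : ∀ i j : Fin m, i < j → v i < u j)
    (h3 : ∀ i, f (u i) < a ∧ b < f (v i)) : (m : ℝ≥0∞) ≤ upcross f a b t :=
  le_iSup_of_le m (le_iSup_of_le u (le_iSup_of_le v (le_iSup_of_le ⟨h1, h2, h3⟩ le_rfl)))

open Finset in
lemma card_up_le (f : ℝ → ℝ) (t : ℝ) {n : ℕ} (pts : Fin (n+1) → ℝ)
    (hmono : StrictMono pts) (h0 : ∀ i, 0 ≤ pts i) (hT : ∀ i, pts i ≤ t)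
    (a b : ℝ) (hab : a < b) :
    ((univ.filter (fun i : Fin n => f (pts i.castSucc) < a ∧ b < f (pts i.succ))).card : ℝ≥0∞)
      ≤ upcross f a b t := by
  set S := univ.filter (fun i : Fin n => f (pts i.castSucc) < a ∧ b < f (pts i.succ)) with hS
  have hmem : ∀ i ∈ S, f (pts i.castSucc) < a ∧ b < f (pts i.succ) := by
    intro i hi; simpa [hS] using hi
  have hadj : ∀ i ∈ S, ∀ j ∈ S, (i : ℕ) + 1 ≠ (j : ℕ) := by
    intro i hi j hj hij
    have h1 := (hmem i hi).2
    have h2 := (hmem j hj).1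
    have hpt : pts i.succ = pts j.castSucc := by
      congr 1; ext; simpa using hij
    rw [hpt] at h1; linarith
  let e := S.orderEmbOfFin rfl
  have hemem : ∀ i, e i ∈ S := fun i => S.orderEmbOfFin_mem rfl i
  refine upcross_ge f a b t S.card
    (fun i => pts (e i).castSucc) (fun i => pts (e i).succ) ?_ ?_ ?_
  · intro i; exact ⟨h0 _, hmono Fin.castSucc_lt_succ, hT _⟩
  · intro i j hij
    have h1 : e i < e j := (S.orderEmbOfFin rfl).strictMono hij
    have h2 : ((e i : ℕ)) + 1 < (e j : ℕ) := by
      rcases lt_or_eq_of_le (Nat.succ_le_of_lt h1) with h | h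
      · exact h
      · exact absurd h (hadj _ (hemem i) _ (hemem j))
    exact hmono (by simpa [Fin.lt_def] using h2)
  · intro i; exact hmem _ (hemem i)

open Finset in
lemma card_down_le (f : ℝ → ℝ) (t : ℝ) {n : ℕ} (pts : Fin (n+1) → ℝ)
    (hmono : StrictMono pts) (h0 : ∀ i, 0 ≤ pts i) (hT : ∀ i, pts i ≤ t)
    (a b : ℝ) (hab : a < b) :
    ((univ.filter (fun i : Fin n => b < f (pts i.castSucc) ∧ f (pts i.succ) < a)).card : ℝ≥0∞)
      ≤ upcross f a b t + 1 := by
  set S := univ.filter (fun i : Fin n => b < f (pts i.castSucc) ∧ f (pts i.succ) < a) with hS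
  have hmem : ∀ i ∈ S, b < f (pts i.castSucc) ∧ f (pts i.succ) < a := by
    intro i hi; simpa [hS] using hi
  have hadj : ∀ i ∈ S, ∀ j ∈ S, (i : ℕ) + 1 ≠ (j : ℕ) := by
    intro i hi j hj hij
    have h1 := (hmem i hi).2
    have h2 := (hmem j hj).1
    have hpt : pts i.succ = pts j.castSucc := by
      congr 1; ext; simpa using hij
    rw [hpt] at h1; linarith
  set m := S.card with hm
  let e := S.orderEmbOfFin rfl
  have hemem : ∀ i, e i ∈ S := fun i => S.orderEmbOfFin_mem rfl i
  have key : ((m - 1 : ℕ) : ℝ≥0∞) ≤ upcross f a b t := by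
    refine upcross_ge f a b t (m - 1)
      (fun i => pts (e ⟨i.1, by omega⟩).succ)
      (fun i => pts (e ⟨i.1 + 1, by omega⟩).castSucc) ?_ ?_ ?_
    · intro i
      refine ⟨h0 _, ?_, hT _⟩
      have h1 : e ⟨i.1, by omega⟩ < e ⟨i.1 + 1, by omega⟩ :=
        (S.orderEmbOfFin rfl).strictMono (by simp [Fin.lt_def])
      have h2 : ((e ⟨i.1, by omega⟩ : ℕ)) + 1 < (e ⟨i.1 + 1, by omega⟩ : ℕ) := by
        rcases lt_or_eq_of_le (Nat.succ_le_of_lt h1) with h | h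
        · exact h
        · exact absurd h (hadj _ (hemem _) _ (hemem _))
      exact hmono (by simpa [Fin.lt_def] using h2)
    · intro i j hij
      have h1 : e ⟨i.1 + 1, by omega⟩ ≤ e ⟨j.1, by omega⟩ :=
        (S.orderEmbOfFin rfl).monotone (by simp [Fin.le_def]; omega)
      exact hmono (Fin.lt_def.2 (Nat.lt_succ_of_le (Fin.le_def.1 h1)))
    · intro i
      exact ⟨(hmem _ (hemem _)).2, (hmem _ (hemem _)).1⟩
  calc (m : ℝ≥0∞) ≤ ((m - 1 : ℕ) : ℝ≥0∞) + 1 := by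
        rcases Nat.eq_zero_or_pos m with h | h
        · simp [h]
        · have : (m : ℝ≥0∞) = ((m - 1 : ℕ) : ℝ≥0∞) + ((1:ℕ) : ℝ≥0∞) := by
            rw [← Nat.cast_add]; congr 1; omega
          rw [this, Nat.cast_one]
    _ ≤ upcross f a b t + 1 := add_le_add key le_rfl

open Finset in
lemma level_bound (f : ℝ → ℝ) (t : ℝ) {n : ℕ} (pts : Fin (n+1) → ℝ)
    (hmono : StrictMono pts) (h0 : ∀ i, 0 ≤ pts i) (hT : ∀ i, pts i ≤ t)
    (lam : ℝ) (hlam : 0 < lam) (hbd : ∀ i, |f (pts i) - f 0| ≤ lam) (k : ℕ) :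
    ((univ.filter (fun i : Fin n =>
        lam * (2:ℝ)^(-(k:ℝ)) < |f (pts i.succ) - f (pts i.castSucc)|)).card : ℝ≥0∞)
      ≤ 2 * gridUpcross f (lam * (2:ℝ)^(-((k:ℝ)+1))) t + (2:ℝ≥0∞)^(k+2) := by
  set δ := lam * (2:ℝ)^(-((k:ℝ)+1)) with hδdef
  have hδ : 0 < δ := mul_pos hlam (Real.rpow_pos_of_pos two_pos _)
  have h2δ : lam * (2:ℝ)^(-(k:ℝ)) = 2 * δ := by
    rw [hδdef]
    rw [show (-(k:ℝ)) = 1 + (-((k:ℝ)+1)) by ring, Real.rpow_add two_pos, Real.rpow_one]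
    ring
  set jlo : ℤ := ⌊(f 0 - lam)/δ⌋ with hjlo
  set P : ℤ := 2^(k+2) with hPdef
  have hPδ : (P:ℝ) * δ = 2 * lam := by
    rw [hPdef, hδdef]
    push_cast
    rw [show ((2:ℝ)^(k+2) : ℝ) = (2:ℝ)^(((k+2 : ℕ)):ℝ) from (Real.rpow_natCast 2 (k+2)).symm]
    rw [show (lam * (2:ℝ)^(-((k:ℝ)+1))) = (2:ℝ)^(-((k:ℝ)+1)) * lam by ring, ← mul_assoc,
      ← Real.rpow_add two_pos]
    push_cast
    rw [show ((k:ℝ)+2) + (-((k:ℝ)+1)) = 1 by ring, Real.rpow_one]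
    try ring
  set J : Finset ℤ := Finset.Icc (jlo+1) (jlo + P - 1) with hJ
  set Up : ℤ → Finset (Fin n) := fun j =>
    univ.filter (fun i => f (pts i.castSucc) < (j:ℝ) * δ ∧ ((j:ℝ) + 1) * δ < f (pts i.succ))
    with hUp
  set Down : ℤ → Finset (Fin n) := fun j =>
    univ.filter (fun i => ((j:ℝ) + 1) * δ < f (pts i.castSucc) ∧ f (pts i.succ) < (j:ℝ) * δ)
    with hDown
  have hsub : (univ.filter (fun i : Fin n =>
      lam * (2:ℝ)^(-(k:ℝ)) < |f (pts i.succ) - f (pts i.castSucc)|)) ⊆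
      J.biUnion (fun j => Up j ∪ Down j) := by
    intro i hi
    rw [mem_filter, h2δ] at hi
    set x := f (pts i.castSucc) with hx
    set y := f (pts i.succ) with hy
    set m := min x y with hmdef
    set M := max x y with hMdef
    have hMm : M - m = |y - x| := by
      rcases le_total x y with h | h
      · rw [hmdef, hMdef, min_eq_left h, max_eq_right h, abs_of_nonneg (by linarith)]
      · rw [hmdef, hMdef, min_eq_right h, max_eq_left h, abs_of_nonpos (by linarith)]; ring
    have hgap : 2 * δ < M - m := by rw [hMm]; exact hi.2
    set j : ℤ := ⌊m/δ⌋ + 1 with hjdef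
    have hj1 : m < (j:ℝ) * δ := by
      have hfl := Int.lt_floor_add_one (m/δ)
      have : m / δ < (j:ℝ) := by rw [hjdef]; push_cast; linarith
      calc m = (m/δ) * δ := by field_simp
        _ < (j:ℝ) * δ := by exact mul_lt_mul_of_pos_right this hδ
    have hj2 : ((j:ℝ) + 1) * δ < M := by
      have h1 : (⌊m/δ⌋ : ℝ) ≤ m/δ := Int.floor_le _
      have h2 : ((j:ℝ) + 1) ≤ m/δ + 2 := by push_cast [hjdef]; try linarith
      have h3 : ((j:ℝ) + 1) * δ ≤ (m/δ + 2) * δ := mul_le_mul_of_nonneg_right h2 hδ.le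
      have h4 : (m/δ + 2) * δ = m + 2*δ := by field_simp; try ring
      linarith
    have hmlo : f 0 - lam ≤ m := by
      have hx1 : f 0 - lam ≤ x := by have := abs_le.1 (hbd i.castSucc); rw [← hx] at this; linarith [this.1]
      have hy1 : f 0 - lam ≤ y := by have := abs_le.1 (hbd i.succ); rw [← hy] at this; linarith [this.1]
      exact le_min hx1 hy1
    have hMhi : M ≤ f 0 + lam := by
      have hx1 : x ≤ f 0 + lam := by have := abs_le.1 (hbd i.castSucc); rw [← hx] at this; linarith [this.2]
      have hy1 : y ≤ f 0 + lam := by have := abs_le.1 (hbd i.succ); rw [← hy] at this; linarith [this.2]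
      exact max_le hx1 hy1
    have hjJ : j ∈ J := by
      rw [hJ, mem_Icc]
      constructor
      · have : jlo ≤ ⌊m/δ⌋ := Int.floor_mono (by gcongr)
        omega
      · -- (j+1)δ < M ≤ f0+lam ; (f0-lam)/δ < jlo+1 ; Pδ = 4lam... 
        have hlt : ((j:ℝ) + 1) * δ < f 0 + lam := lt_of_lt_of_le hj2 hMhi
        have hlt2 : (j:ℝ) + 1 < (f 0 + lam)/δ := by
          rw [lt_div_iff₀ hδ]; linarith
        have hlt3 : (f 0 + lam)/δ = (f 0 - lam)/δ + 2*lam/δ := by field_simp; ring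
        have hfl : (f 0 - lam)/δ < (jlo:ℝ) + 1 := by
          rw [hjlo]; exact Int.lt_floor_add_one _
        have h2l : 2*lam/δ ≤ (P:ℝ) := by
          rw [div_le_iff₀ hδ]; nlinarith
        have : (j:ℝ) + 1 < (jlo:ℝ) + 1 + (P:ℝ) := by linarith
        have : (j:ℝ) < (jlo:ℝ) + (P:ℝ) := by linarith
        have hjj : j < jlo + P := by exact_mod_cast this
        omega
    rw [Finset.mem_biUnion]
    refine ⟨j, hjJ, ?_⟩
    rw [Finset.mem_union]
    rcases le_total x y with hc | hc
    · left
      rw [hUp, mem_filter]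
      refine ⟨mem_univ _, ?_, ?_⟩
      · rw [← hx]; calc f (pts i.castSucc) = x := rfl
          _ = m := by rw [hmdef, min_eq_left hc]
          _ < (j:ℝ) * δ := hj1
      · calc ((j:ℝ) + 1) * δ < M := hj2
          _ = y := by rw [hMdef, max_eq_right hc]
          _ = f (pts i.succ) := rfl
    · right
      rw [hDown, mem_filter]
      refine ⟨mem_univ _, ?_, ?_⟩
      · calc ((j:ℝ) + 1) * δ < M := hj2
          _ = x := by rw [hMdef, max_eq_left hc]
          _ = f (pts i.castSucc) := rfl
      · calc f (pts i.succ) = y := rfl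
          _ = m := by rw [hmdef, min_eq_right hc]
          _ < (j:ℝ) * δ := hj1
  have hab : ∀ j : ℤ, (j:ℝ) * δ < ((j:ℝ) + 1) * δ := fun j => by nlinarith
  calc ((univ.filter (fun i : Fin n =>
        lam * (2:ℝ)^(-(k:ℝ)) < |f (pts i.succ) - f (pts i.castSucc)|)).card : ℝ≥0∞)
      ≤ ((J.biUnion (fun j => Up j ∪ Down j)).card : ℝ≥0∞) :=
        Nat.cast_le.2 (Finset.card_le_card hsub)
    _ ≤ ((∑ j ∈ J, (Up j ∪ Down j).card : ℕ) : ℝ≥0∞) := Nat.cast_le.2 Finset.card_biUnion_le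
    _ ≤ ((∑ j ∈ J, ((Up j).card + (Down j).card) : ℕ) : ℝ≥0∞) :=
        Nat.cast_le.2 (Finset.sum_le_sum fun j _ => Finset.card_union_le _ _)
    _ = ∑ j ∈ J, (((Up j).card : ℝ≥0∞) + ((Down j).card : ℝ≥0∞)) := by push_cast; rfl
    _ ≤ ∑ j ∈ J, (upcross f ((j:ℝ) * δ) (((j:ℝ) + 1) * δ) t
          + (upcross f ((j:ℝ) * δ) (((j:ℝ) + 1) * δ) t + 1)) := by
        refine Finset.sum_le_sum fun j _ => add_le_add ?_ ?_
        · exact card_up_le f t pts hmono h0 hT _ _ (hab j)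
        · exact card_down_le f t pts hmono h0 hT _ _ (hab j)
    _ = 2 * (∑ j ∈ J, upcross f ((j:ℝ) * δ) (((j:ℝ) + 1) * δ) t) + (J.card : ℝ≥0∞) := by
        rw [Finset.sum_add_distrib, Finset.sum_add_distrib, Finset.sum_const, two_mul]
        simp [add_assoc]
    _ ≤ 2 * gridUpcross f δ t + (2:ℝ≥0∞)^(k+2) := by
        refine add_le_add (mul_le_mul_right ?_ 2) ?_
        · exact ENNReal.sum_le_tsum J
        · have hcard : J.card ≤ 2^(k+2) := by
            rw [hJ, Int.card_Icc]
            have : jlo + P - 1 + 1 - (jlo + 1) = P - 1 := by ring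
            rw [this, hPdef, Int.toNat_le]
            push_cast
            omega
          calc (J.card : ℝ≥0∞) ≤ ((2^(k+2) : ℕ) : ℝ≥0∞) := Nat.cast_le.2 hcard
            _ = (2:ℝ≥0∞)^(k+2) := by push_cast; rfl

lemma geomSumLe {r : ℝ} (h0 : 0 ≤ r) (h1 : r < 1) (N : ℕ) :
    ∑ k ∈ Finset.range N, r^k ≤ 1/(1-r) := by
  have := Summable.sum_le_tsum (Finset.range N) (fun i _ => pow_nonneg h0 i)
    (summable_geometric_of_lt_one h0 h1)
  rw [tsum_geometric_of_lt_one h0 h1] at this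
  simpa [one_div] using this

lemma term_eq (p q : ℝ) (lam : ℝ) (hlam : 0 ≤ lam) (k : ℕ) :
    (2:ℝ)^(((k:ℝ)+1)*q) * (lam * 2^((1:ℝ)-(k:ℝ)))^p
      = lam^p * ((2:ℝ)^(p+q) * ((2:ℝ)^(q-p))^k) := by
  have h2 : (0:ℝ) ≤ 2 := by norm_num
  have e1 : (lam * 2^((1:ℝ)-(k:ℝ)))^p = lam^p * (2:ℝ)^((1-(k:ℝ))*p) := by
    rw [Real.mul_rpow hlam (Real.rpow_pos_of_pos two_pos _).le, ← Real.rpow_mul h2]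
  have e2 : ((2:ℝ)^(q-p))^k = (2:ℝ)^((q-p)*(k:ℝ)) := by
    rw [← Real.rpow_natCast ((2:ℝ)^(q-p)) k, ← Real.rpow_mul h2]
  have e3 : (2:ℝ)^(((k:ℝ)+1)*q) * (2:ℝ)^((1-(k:ℝ))*p) = (2:ℝ)^(p+q) * (2:ℝ)^((q-p)*(k:ℝ)) := by
    rw [← Real.rpow_add two_pos, ← Real.rpow_add two_pos]
    congr 1; ring
  rw [e1, e2, ← e3]; ring

lemma term2_eq (p : ℝ) (lam : ℝ) (hlam : 0 ≤ lam) (k : ℕ) :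
    (2:ℝ)^(k+2) * (lam * 2^((1:ℝ)-(k:ℝ)))^p
      = lam^p * ((2:ℝ)^(p+2) * ((2:ℝ)^((1:ℝ)-p))^k) := by
  have h2 : (0:ℝ) ≤ 2 := by norm_num
  have e0 : ((2:ℝ)^(k+2) : ℝ) = (2:ℝ)^(((k:ℝ))+2) := by
    rw [← Real.rpow_natCast 2 (k+2)]; push_cast; ring_nf
  have e1 : (lam * 2^((1:ℝ)-(k:ℝ)))^p = lam^p * (2:ℝ)^((1-(k:ℝ))*p) := by
    rw [Real.mul_rpow hlam (Real.rpow_pos_of_pos two_pos _).le, ← Real.rpow_mul h2]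
  have e2 : ((2:ℝ)^((1:ℝ)-p))^k = (2:ℝ)^(((1:ℝ)-p)*(k:ℝ)) := by
    rw [← Real.rpow_natCast ((2:ℝ)^((1:ℝ)-p)) k, ← Real.rpow_mul h2]
  have e3 : (2:ℝ)^((k:ℝ)+2) * (2:ℝ)^((1-(k:ℝ))*p) = (2:ℝ)^(p+2) * (2:ℝ)^(((1:ℝ)-p)*(k:ℝ)) := by
    rw [← Real.rpow_add two_pos, ← Real.rpow_add two_pos]
    congr 1; ring
  rw [e0, e1, e2, ← e3]; ring

lemma real_sum1 (p q lam : ℝ) (hlam : 0 ≤ lam) (hq : 1 ≤ q) (hqp : q < p) (N : ℕ) :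
    ∑ k ∈ Finset.range N, (2:ℝ)^(((k:ℝ)+1)*q) * (lam * 2^((1:ℝ)-(k:ℝ)))^p
      ≤ lam^p * ((2:ℝ)^(p+q+1) / (1 - (2:ℝ)^(q-p))) := by
  have hr0 : (0:ℝ) ≤ (2:ℝ)^(q-p) := (Real.rpow_pos_of_pos two_pos _).le
  have hr1 : (2:ℝ)^(q-p) < 1 := Real.rpow_lt_one_of_one_lt_of_neg one_lt_two (by linarith)
  calc ∑ k ∈ Finset.range N, (2:ℝ)^(((k:ℝ)+1)*q) * (lam * 2^((1:ℝ)-(k:ℝ)))^p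
      = lam^p * (2:ℝ)^(p+q) * ∑ k ∈ Finset.range N, ((2:ℝ)^(q-p))^k := by
        rw [Finset.mul_sum]
        exact Finset.sum_congr rfl fun k _ => by rw [term_eq p q lam hlam k]; ring
    _ ≤ lam^p * (2:ℝ)^(p+q) * (1/(1 - (2:ℝ)^(q-p))) := by
        refine mul_le_mul_of_nonneg_left (geomSumLe hr0 hr1 N) ?_
        positivity
    _ ≤ lam^p * ((2:ℝ)^(p+q+1) / (1 - (2:ℝ)^(q-p))) := by
        rw [mul_assoc]
        refine mul_le_mul_of_nonneg_left ?_ (by positivity)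
        rw [mul_one_div, div_le_div_iff₀ (by linarith) (by linarith)]
        have : (2:ℝ)^(p+q) ≤ (2:ℝ)^(p+q+1) :=
          Real.rpow_le_rpow_left_iff one_lt_two |>.2 (by linarith)
        nlinarith [Real.rpow_pos_of_pos (two_pos) (p+q)]

lemma real_sum2 (p q lam : ℝ) (hlam : 0 ≤ lam) (hq : 1 ≤ q) (hqp : q < p) (N : ℕ) :
    ∑ k ∈ Finset.range N, (2:ℝ)^(k+2) * (lam * 2^((1:ℝ)-(k:ℝ)))^p
      ≤ lam^p * ((2:ℝ)^(p+q+1) / (1 - (2:ℝ)^(q-p))) := by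
  have hp1 : 1 < p := lt_of_le_of_lt hq hqp
  have hs0 : (0:ℝ) ≤ (2:ℝ)^((1:ℝ)-p) := (Real.rpow_pos_of_pos two_pos _).le
  have hs1 : (2:ℝ)^((1:ℝ)-p) < 1 := Real.rpow_lt_one_of_one_lt_of_neg one_lt_two (by linarith)
  have hr1 : (2:ℝ)^(q-p) < 1 := Real.rpow_lt_one_of_one_lt_of_neg one_lt_two (by linarith)
  have hsr : (2:ℝ)^((1:ℝ)-p) ≤ (2:ℝ)^(q-p) :=
    Real.rpow_le_rpow_left_iff one_lt_two |>.2 (by linarith)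
  calc ∑ k ∈ Finset.range N, (2:ℝ)^(k+2) * (lam * 2^((1:ℝ)-(k:ℝ)))^p
      = lam^p * (2:ℝ)^(p+2) * ∑ k ∈ Finset.range N, ((2:ℝ)^((1:ℝ)-p))^k := by
        rw [Finset.mul_sum]
        exact Finset.sum_congr rfl fun k _ => by rw [term2_eq p lam hlam k]; ring
    _ ≤ lam^p * (2:ℝ)^(p+2) * (1/(1 - (2:ℝ)^((1:ℝ)-p))) := by
        refine mul_le_mul_of_nonneg_left (geomSumLe hs0 hs1 N) ?_
        positivity
    _ ≤ lam^p * ((2:ℝ)^(p+q+1) / (1 - (2:ℝ)^(q-p))) := by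
        rw [mul_assoc]
        refine mul_le_mul_of_nonneg_left ?_ (by positivity)
        rw [mul_one_div]
        refine div_le_div₀ (by positivity) ?_ (by linarith) (by linarith)
        exact Real.rpow_le_rpow_left_iff one_lt_two |>.2 (by linarith)

lemma bucket {lam Δ : ℝ} (hlam : 0 < lam) (hΔ : 0 < Δ) (hΔ2 : Δ ≤ 2*lam) :
    ∃ k : ℕ, lam * (2:ℝ)^(-(k:ℝ)) < Δ ∧ Δ ≤ lam * (2:ℝ)^((1:ℝ)-(k:ℝ)) := by
  have hpow : ∀ m : ℕ, (2:ℝ)^(-(m:ℝ)) = (1/2:ℝ)^m := by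
    intro m
    rw [Real.rpow_neg (by norm_num), Real.rpow_natCast]
    simp [one_div, inv_pow]
  have hex : ∃ k : ℕ, lam * (2:ℝ)^(-(k:ℝ)) < Δ := by
    obtain ⟨m, hm⟩ := exists_pow_lt_of_lt_one (div_pos hΔ hlam) (by norm_num : (1/2:ℝ) < 1)
    refine ⟨m, ?_⟩
    rw [hpow m]
    calc lam * (1/2:ℝ)^m < lam * (Δ/lam) := mul_lt_mul_of_pos_left hm hlam
      _ = Δ := by field_simp
  classical
  refine ⟨Nat.find hex, Nat.find_spec hex, ?_⟩
  rcases Nat.eq_zero_or_pos (Nat.find hex) with h | h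
  · rw [h]
    push_cast
    rw [sub_zero, Real.rpow_one]
    linarith
  · have hmin := Nat.find_min hex (m := Nat.find hex - 1) (by omega)
    push_neg at hmin
    have hc : ((Nat.find hex - 1 : ℕ) : ℝ) = (Nat.find hex : ℝ) - 1 := by
      push_cast [h]; ring
    rw [hc] at hmin
    calc Δ ≤ lam * (2:ℝ)^(-((Nat.find hex : ℝ) - 1)) := hmin
      _ = lam * (2:ℝ)^((1:ℝ)-(Nat.find hex : ℝ)) := by rw [show -((Nat.find hex : ℝ) - 1) = (1:ℝ) - (Nat.find hex : ℝ) by ring]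


end BruneauHelpers

/-- Bruneau's lemma: for continuous `f`, `t ∈ (0,T]`, `1 ≤ q < p`
and `λ ≥ sup_{s∈[0,t]} |f(s) − f(0)|`,
`var_p(f,[0,t]) ≤ (2^{p+q+1}/(1 − 2^{q−p})) (2c + 1) λ^p`, where
`c = sup_k 2^{−kq} M_t(f, λ2^{−k})`. -/
theorem stmt11 (T : ℝ) (hT : 0 < T) (f : ℝ → ℝ)
    (hf : ContinuousOn f (Set.Icc 0 T)) (t : ℝ) (ht : t ∈ Set.Ioc (0 : ℝ) T)
    (p q : ℝ) (hq : 1 ≤ q) (hqp : q < p) (lam : ℝ)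
    (hlam : ∀ s ∈ Set.Icc (0 : ℝ) t, |f s - f 0| ≤ lam) :
    pVar p f 0 t ≤
      ENNReal.ofReal ((2 : ℝ) ^ (p + q + 1) / (1 - (2 : ℝ) ^ (q - p))) *
        (2 * (⨆ k : ℕ, ENNReal.ofReal ((2 : ℝ) ^ (-(k : ℝ) * q)) *
            gridUpcross f (lam * (2 : ℝ) ^ (-(k : ℝ))) t) + 1) *
        ENNReal.ofReal (lam ^ p) := by
  classical
  have hp1 : 1 < p := lt_of_le_of_lt hq hqp
  have hp : 0 < p := by linarith
  have hrpos : (0:ℝ) < (2:ℝ)^(q-p) := Real.rpow_pos_of_pos two_pos _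
  have hr1 : (2:ℝ)^(q-p) < 1 := Real.rpow_lt_one_of_one_lt_of_neg one_lt_two (by linarith)
  set D : ℝ := (2:ℝ)^(p+q+1) / (1 - (2:ℝ)^(q-p)) with hDdef
  set c : ℝ≥0∞ := ⨆ k : ℕ, ENNReal.ofReal ((2 : ℝ) ^ (-(k : ℝ) * q)) *
      gridUpcross f (lam * (2 : ℝ) ^ (-(k : ℝ))) t with hc
  rw [pVar]
  refine iSup_le fun n => iSup_le fun pts => iSup_le fun hpts => ?_
  obtain ⟨hmono, hstart, hend⟩ := hpts
  have h0 : ∀ i, 0 ≤ pts i := fun i => hstart ▸ hmono.monotone (Fin.zero_le i)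
  have hTt : ∀ i, pts i ≤ t := fun i => hend ▸ hmono.monotone (Fin.le_last i)
  have hbd : ∀ i, |f (pts i) - f 0| ≤ lam := fun i => hlam _ ⟨h0 i, hTt i⟩
  have hlam0 : 0 ≤ lam := le_trans (abs_nonneg _) (hlam 0 ⟨le_refl 0, ht.1.le⟩)
  have hΔ2 : ∀ i : Fin n, |f (pts i.succ) - f (pts i.castSucc)| ≤ 2 * lam := by
    intro i
    have h1 := abs_le.1 (hbd i.succ)
    have h2 := abs_le.1 (hbd i.castSucc)
    exact abs_le.2 ⟨by linarith [h1.1, h2.2], by linarith [h1.2, h2.1]⟩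
  rcases eq_or_lt_of_le hlam0 with h0lam | hlampos
  · refine le_trans (le_of_eq (Finset.sum_eq_zero ?_)) zero_le
    intro i _
    have h1 : |f (pts i.succ) - f (pts i.castSucc)| = 0 :=
      le_antisymm (by have := hΔ2 i; rw [← h0lam] at this; linarith) (abs_nonneg _)
    rw [h1, Real.zero_rpow (ne_of_gt hp), ENNReal.ofReal_zero]
  -- main case lam > 0
  set kf : Fin n → ℕ := fun i =>
    if h : 0 < |f (pts i.succ) - f (pts i.castSucc)| then
      (bucket hlampos h (hΔ2 i)).choose else 0 with hkf
  have hkf1 : ∀ i, 0 < |f (pts i.succ) - f (pts i.castSucc)| →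
      lam * (2:ℝ)^(-(kf i:ℝ)) < |f (pts i.succ) - f (pts i.castSucc)| := by
    intro i h
    rw [hkf]; simp only [dif_pos h]
    exact (bucket hlampos h (hΔ2 i)).choose_spec.1
  have hkf2 : ∀ i, 0 < |f (pts i.succ) - f (pts i.castSucc)| →
      |f (pts i.succ) - f (pts i.castSucc)| ≤ lam * (2:ℝ)^((1:ℝ)-(kf i:ℝ)) := by
    intro i h
    rw [hkf]; simp only [dif_pos h]
    exact (bucket hlampos h (hΔ2 i)).choose_spec.2
  set s0 : Finset (Fin n) :=
    Finset.univ.filter (fun i : Fin n => 0 < |f (pts i.succ) - f (pts i.castSucc)|) with hs0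
  set K : ℕ := Finset.univ.sup kf with hK
  have hGle : ∀ k : ℕ, gridUpcross f (lam * (2:ℝ)^(-((k:ℝ)+1))) t
      ≤ ENNReal.ofReal ((2:ℝ)^(((k:ℝ)+1)*q)) * c := by
    intro k
    have h1 : ENNReal.ofReal ((2:ℝ)^(-((k:ℝ)+1)*q)) *
        gridUpcross f (lam * (2:ℝ)^(-((k:ℝ)+1))) t ≤ c := by
      have h2 := le_iSup (fun j : ℕ => ENNReal.ofReal ((2 : ℝ) ^ (-(j : ℝ) * q)) *
        gridUpcross f (lam * (2 : ℝ) ^ (-(j : ℝ))) t) (k+1)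
      rw [show (((k+1:ℕ)):ℝ) = (k:ℝ)+1 from by push_cast; ring] at h2
      exact h2
    have hone : ENNReal.ofReal ((2:ℝ)^(((k:ℝ)+1)*q)) * ENNReal.ofReal ((2:ℝ)^(-((k:ℝ)+1)*q))
        = 1 := by
      rw [← ENNReal.ofReal_mul (Real.rpow_pos_of_pos two_pos _).le,
        ← Real.rpow_add two_pos, show ((k:ℝ)+1)*q + -((k:ℝ)+1)*q = 0 by ring,
        Real.rpow_zero, ENNReal.ofReal_one]
    calc gridUpcross f (lam * (2:ℝ)^(-((k:ℝ)+1))) t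
        = 1 * gridUpcross f (lam * (2:ℝ)^(-((k:ℝ)+1))) t := (one_mul _).symm
      _ = ENNReal.ofReal ((2:ℝ)^(((k:ℝ)+1)*q)) * (ENNReal.ofReal ((2:ℝ)^(-((k:ℝ)+1)*q)) *
            gridUpcross f (lam * (2:ℝ)^(-((k:ℝ)+1))) t) := by rw [← hone, mul_assoc]
      _ ≤ ENNReal.ofReal ((2:ℝ)^(((k:ℝ)+1)*q)) * c := mul_le_mul_right h1 _
  have e1 : ∑ i : Fin n, ENNReal.ofReal (|f (pts i.succ) - f (pts i.castSucc)| ^ p)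
      = ∑ i ∈ s0, ENNReal.ofReal (|f (pts i.succ) - f (pts i.castSucc)| ^ p) := by
    symm
    apply Finset.sum_subset (Finset.filter_subset _ _)
    intro i _ hi
    rw [Finset.mem_filter] at hi
    push_neg at hi
    have h1 : |f (pts i.succ) - f (pts i.castSucc)| = 0 :=
      le_antisymm (hi (Finset.mem_univ i)) (abs_nonneg _)
    rw [h1, Real.zero_rpow (ne_of_gt hp), ENNReal.ofReal_zero]
  have e2 : ∑ i ∈ s0, ENNReal.ofReal (|f (pts i.succ) - f (pts i.castSucc)| ^ p)
      = ∑ k ∈ Finset.range (K+1), ∑ i ∈ s0.filter (fun i => kf i = k),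
          ENNReal.ofReal (|f (pts i.succ) - f (pts i.castSucc)| ^ p) :=
    (Finset.sum_fiberwise_of_maps_to (fun i _ => Finset.mem_range.2
      (Nat.lt_succ_of_le (Finset.le_sup (Finset.mem_univ i)))) _).symm
  have e3 : ∀ k ∈ Finset.range (K+1),
      ∑ i ∈ s0.filter (fun i => kf i = k),
          ENNReal.ofReal (|f (pts i.succ) - f (pts i.castSucc)| ^ p)
      ≤ (2 * gridUpcross f (lam * (2:ℝ)^(-((k:ℝ)+1))) t + (2:ℝ≥0∞)^(k+2)) *
          ENNReal.ofReal ((lam * (2:ℝ)^((1:ℝ)-(k:ℝ)))^p) := by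
    intro k _
    have hmem : ∀ i ∈ s0.filter (fun i => kf i = k),
        0 < |f (pts i.succ) - f (pts i.castSucc)| ∧ kf i = k := by
      intro i hi
      rw [Finset.mem_filter, hs0, Finset.mem_filter] at hi
      exact ⟨hi.1.2, hi.2⟩
    have hsub : s0.filter (fun i => kf i = k) ⊆ Finset.univ.filter
        (fun i : Fin n => lam * (2:ℝ)^(-(k:ℝ)) < |f (pts i.succ) - f (pts i.castSucc)|) := by
      intro i hi
      obtain ⟨hpos, hkeq⟩ := hmem i hi
      rw [Finset.mem_filter]
      exact ⟨Finset.mem_univ i, hkeq ▸ hkf1 i hpos⟩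
    have hcard := level_bound f t pts hmono h0 hTt lam hlampos hbd k
    calc ∑ i ∈ s0.filter (fun i => kf i = k),
            ENNReal.ofReal (|f (pts i.succ) - f (pts i.castSucc)| ^ p)
        ≤ ∑ _i ∈ s0.filter (fun i => kf i = k),
            ENNReal.ofReal ((lam * (2:ℝ)^((1:ℝ)-(k:ℝ)))^p) := by
          refine Finset.sum_le_sum fun i hi => ?_
          obtain ⟨hpos, hkeq⟩ := hmem i hi
          exact ENNReal.ofReal_le_ofReal
            (Real.rpow_le_rpow (abs_nonneg _) (hkeq ▸ hkf2 i hpos) hp.le)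
      _ = ((s0.filter (fun i => kf i = k)).card : ℝ≥0∞) *
            ENNReal.ofReal ((lam * (2:ℝ)^((1:ℝ)-(k:ℝ)))^p) := by
          rw [Finset.sum_const, nsmul_eq_mul]
      _ ≤ (2 * gridUpcross f (lam * (2:ℝ)^(-((k:ℝ)+1))) t + (2:ℝ≥0∞)^(k+2)) *
            ENNReal.ofReal ((lam * (2:ℝ)^((1:ℝ)-(k:ℝ)))^p) := by
          refine mul_le_mul_left (le_trans ?_ hcard) _
          exact_mod_cast Nat.cast_le.2 (Finset.card_le_card hsub)
  have partA : ∑ k ∈ Finset.range (K+1),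
      gridUpcross f (lam * (2:ℝ)^(-((k:ℝ)+1))) t *
        ENNReal.ofReal ((lam * (2:ℝ)^((1:ℝ)-(k:ℝ)))^p)
      ≤ c * ENNReal.ofReal (lam^p * D) := by
    have hterm : ∀ k : ℕ, (0:ℝ) ≤ (lam * (2:ℝ)^((1:ℝ)-(k:ℝ)))^p :=
      fun k => Real.rpow_nonneg (mul_nonneg hlam0 (Real.rpow_pos_of_pos two_pos _).le) p
    calc ∑ k ∈ Finset.range (K+1), gridUpcross f (lam * (2:ℝ)^(-((k:ℝ)+1))) t *
          ENNReal.ofReal ((lam * (2:ℝ)^((1:ℝ)-(k:ℝ)))^p)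
        ≤ ∑ k ∈ Finset.range (K+1), (ENNReal.ofReal ((2:ℝ)^(((k:ℝ)+1)*q)) * c) *
            ENNReal.ofReal ((lam * (2:ℝ)^((1:ℝ)-(k:ℝ)))^p) :=
          Finset.sum_le_sum fun k _ => mul_le_mul_left (hGle k) _
      _ = c * ∑ k ∈ Finset.range (K+1),
            ENNReal.ofReal ((2:ℝ)^(((k:ℝ)+1)*q) * (lam * (2:ℝ)^((1:ℝ)-(k:ℝ)))^p) := by
          rw [Finset.mul_sum]
          refine Finset.sum_congr rfl fun k _ => ?_
          rw [ENNReal.ofReal_mul (Real.rpow_pos_of_pos two_pos _).le]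
          ring
      _ = c * ENNReal.ofReal (∑ k ∈ Finset.range (K+1),
            (2:ℝ)^(((k:ℝ)+1)*q) * (lam * (2:ℝ)^((1:ℝ)-(k:ℝ)))^p) := by
          rw [ENNReal.ofReal_sum_of_nonneg
            (fun k _ => mul_nonneg (Real.rpow_pos_of_pos two_pos _).le (hterm k))]
      _ ≤ c * ENNReal.ofReal (lam^p * D) := by
          refine mul_le_mul_right (ENNReal.ofReal_le_ofReal ?_) _
          exact real_sum1 p q lam hlam0 hq hqp (K+1)
  have partB : ∑ k ∈ Finset.range (K+1),
      (2:ℝ≥0∞)^(k+2) * ENNReal.ofReal ((lam * (2:ℝ)^((1:ℝ)-(k:ℝ)))^p)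
      ≤ ENNReal.ofReal (lam^p * D) := by
    have hterm : ∀ k : ℕ, (0:ℝ) ≤ (lam * (2:ℝ)^((1:ℝ)-(k:ℝ)))^p :=
      fun k => Real.rpow_nonneg (mul_nonneg hlam0 (Real.rpow_pos_of_pos two_pos _).le) p
    calc ∑ k ∈ Finset.range (K+1),
          (2:ℝ≥0∞)^(k+2) * ENNReal.ofReal ((lam * (2:ℝ)^((1:ℝ)-(k:ℝ)))^p)
        = ∑ k ∈ Finset.range (K+1),
            ENNReal.ofReal ((2:ℝ)^(k+2) * (lam * (2:ℝ)^((1:ℝ)-(k:ℝ)))^p) := by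
          refine Finset.sum_congr rfl fun k _ => ?_
          rw [ENNReal.ofReal_mul (by positivity), ENNReal.ofReal_pow (by norm_num)]
          norm_num
      _ = ENNReal.ofReal (∑ k ∈ Finset.range (K+1),
            (2:ℝ)^(k+2) * (lam * (2:ℝ)^((1:ℝ)-(k:ℝ)))^p) := by
          rw [ENNReal.ofReal_sum_of_nonneg
            (fun k _ => mul_nonneg (by positivity) (hterm k))]
      _ ≤ ENNReal.ofReal (lam^p * D) :=
          ENNReal.ofReal_le_ofReal (real_sum2 p q lam hlam0 hq hqp (K+1))
  calc ∑ i : Fin n, ENNReal.ofReal (|f (pts i.succ) - f (pts i.castSucc)| ^ p)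
      = ∑ k ∈ Finset.range (K+1), ∑ i ∈ s0.filter (fun i => kf i = k),
          ENNReal.ofReal (|f (pts i.succ) - f (pts i.castSucc)| ^ p) := by rw [e1, e2]
    _ ≤ ∑ k ∈ Finset.range (K+1),
          (2 * gridUpcross f (lam * (2:ℝ)^(-((k:ℝ)+1))) t + (2:ℝ≥0∞)^(k+2)) *
            ENNReal.ofReal ((lam * (2:ℝ)^((1:ℝ)-(k:ℝ)))^p) := Finset.sum_le_sum e3
    _ = 2 * (∑ k ∈ Finset.range (K+1), gridUpcross f (lam * (2:ℝ)^(-((k:ℝ)+1))) t *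
            ENNReal.ofReal ((lam * (2:ℝ)^((1:ℝ)-(k:ℝ)))^p))
        + ∑ k ∈ Finset.range (K+1),
            (2:ℝ≥0∞)^(k+2) * ENNReal.ofReal ((lam * (2:ℝ)^((1:ℝ)-(k:ℝ)))^p) := by
        rw [Finset.mul_sum, ← Finset.sum_add_distrib]
        refine Finset.sum_congr rfl fun k _ => ?_
        ring
    _ ≤ 2 * (c * ENNReal.ofReal (lam^p * D)) + ENNReal.ofReal (lam^p * D) :=
        add_le_add (mul_le_mul_right partA 2) partB
    _ = ENNReal.ofReal D * (2 * c + 1) * ENNReal.ofReal (lam ^ p) := by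
        rw [ENNReal.ofReal_mul (Real.rpow_nonneg hlam0 p)]
        ring
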